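/- Let A be a normal subgroup of a finite group G such that G/A is a π-group, and let U be a π-Hall subgroup of A. Then there exists a π-Hall subgroup H of G with H ∩ A = U if and only if the G-conjugacy class of U equals the A-conjugacy class of U. -/

import Mathlib

/-- The conjugate subgroup `g H g⁻¹`. -/
def conjSub {G : Type*} [Group G] (g : G) (H : Subgroup G) : Subgroup G :=
  H.map (MulAut.conj g).toMonoidHom

/-- `H` is pronormal in `G`: for every `g`, `H` and `H^g` are conjugate in `⟨H, H^g⟩`. -/
def IsPronormal {G : Type*} [Group G] (H : Subgroup G) : Prop :=
  ∀ g : G, ∃ x ∈ H ⊔ conjSub g H, conjSub x H = conjSub g H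

/-- `n` is a `π`-number: all its prime divisors lie in `π`. -/
def IsPiNumber (π : Set ℕ) (n : ℕ) : Prop :=
  ∀ p : ℕ, p.Prime → p ∣ n → p ∈ π

/-- `n` is a `π'`-number: none of its prime divisors lies in `π`. -/
def IsPiPrimeNumber (π : Set ℕ) (n : ℕ) : Prop :=
  ∀ p : ℕ, p.Prime → p ∣ n → p ∉ π

/-- `H` is a `π`-Hall subgroup: its order is a `π`-number and its index a `π'`-number. -/
def IsHall {G : Type*} [Group G] (π : Set ℕ) (H : Subgroup G) : Prop :=
  IsPiNumber π (Nat.card H) ∧ IsPiPrimeNumber π H.index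

/-- A group is `π`-separable if it has a normal series each of whose factors is a
`π`-group or a `π'`-group. -/
def IsPiSeparable (π : Set ℕ) (G : Type*) [Group G] : Prop :=
  ∃ n : ℕ, ∃ s : Fin (n + 1) → Subgroup G,
    Monotone s ∧ s 0 = ⊥ ∧ s (Fin.last n) = ⊤ ∧
    (∀ i, (s i).Normal) ∧
    ∀ i : Fin n,
      IsPiNumber π (Nat.card (s i.succ) / Nat.card (s i.castSucc)) ∨
      IsPiPrimeNumber π (Nat.card (s i.succ) / Nat.card (s i.castSucc))

/-- The `A`-conjugacy class `{H^a : a ∈ A}` of a subgroup `H`. -/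
def conjClassOn {G : Type*} [Group G] (A : Subgroup G) (H : Subgroup G) : Set (Subgroup G) :=
  {K | ∃ a ∈ A, K = conjSub a H}

/-- The `G`-conjugacy class `{H^g : g ∈ G}` of a subgroup `H`. -/
def conjClass {G : Type*} [Group G] (H : Subgroup G) : Set (Subgroup G) :=
  {K | ∃ g : G, K = conjSub g H}

lemma mem_conjSub {G : Type*} [Group G] {g z : G} {H : Subgroup G} :
    z ∈ conjSub g H ↔ g⁻¹ * z * g ∈ H := by
  simp only [conjSub, Subgroup.mem_map, MulEquiv.coe_toMonoidHom, MulAut.conj_apply]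
  constructor
  · rintro ⟨x, hx, rfl⟩; group; simpa using hx
  · intro h; exact ⟨g⁻¹ * z * g, h, by group⟩

lemma conjSub_conjSub {G : Type*} [Group G] (a b : G) (H : Subgroup G) :
    conjSub a (conjSub b H) = conjSub (a * b) H := by
  ext z
  simp only [mem_conjSub]
  rw [show (a * b)⁻¹ * z * (a * b) = b⁻¹ * (a⁻¹ * z * a) * b by group]

lemma isPiNumber_of_dvd {π : Set ℕ} {m n : ℕ} (h : m ∣ n) (hn : IsPiNumber π n) :
    IsPiNumber π m := fun p hp hpm => hn p hp (hpm.trans h)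

lemma isPiPrimeNumber_of_dvd {π : Set ℕ} {m n : ℕ} (h : m ∣ n) (hn : IsPiPrimeNumber π n) :
    IsPiPrimeNumber π m := fun p hp hpm => hn p hp (hpm.trans h)

lemma isPiNumber_mul {π : Set ℕ} {m n : ℕ} (hm : IsPiNumber π m) (hn : IsPiNumber π n) :
    IsPiNumber π (m * n) := fun p hp hpmn => by
  rcases (Nat.Prime.dvd_mul hp).mp hpmn with h | h
  · exact hm p hp h
  · exact hn p hp h

lemma pi_coprime {π : Set ℕ} {m n : ℕ} (hm : IsPiNumber π m) (hn : IsPiPrimeNumber π n) :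
    Nat.Coprime m n := by
  by_contra h
  have h1 : Nat.gcd m n ≠ 1 := h
  have hp : (Nat.gcd m n).minFac.Prime := Nat.minFac_prime h1
  have hd := Nat.minFac_dvd (Nat.gcd m n)
  exact hn _ hp (hd.trans (Nat.gcd_dvd_right m n))
    (hm _ hp (hd.trans (Nat.gcd_dvd_left m n)))

open scoped Pointwise in
theorem stmt_4 {G : Type*} [Group G] [Finite G] (π : Set ℕ) (A U : Subgroup G)
    (hA : A.Normal) (hquot : IsPiNumber π A.index)
    (hUA : U ≤ A) (hU : IsHall π (U.subgroupOf A)) :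
    (∃ H : Subgroup G, IsHall π H ∧ H ⊓ A = U) ↔
      conjClass U = conjClassOn A U := by
  haveI := hA
  constructor
  · rintro ⟨H, ⟨hHcard, hHindex⟩, hHA⟩
    -- A ⊔ H = ⊤
    have htop : A ⊔ H = ⊤ := by
      rw [← Subgroup.index_eq_one]
      by_contra hne
      have hp : (A ⊔ H).index.minFac.Prime := Nat.minFac_prime hne
      have hd := Nat.minFac_dvd (A ⊔ H).index
      exact hHindex _ hp (hd.trans (Subgroup.index_dvd_of_le le_sup_right))
        (hquot _ hp (hd.trans (Subgroup.index_dvd_of_le le_sup_left)))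
    -- U is normal in H
    have hconjH : ∀ h ∈ H, conjSub h U = U := by
      intro h hh
      ext z
      rw [mem_conjSub]
      constructor
      · intro hz
        have hz' : z = h * (h⁻¹ * z * h) * h⁻¹ := by group
        rw [← hHA]
        constructor
        · rw [hz']
          exact H.mul_mem (H.mul_mem hh ((hHA.symm.le.trans inf_le_left) hz))
            (H.inv_mem hh)
        · rw [hz']
          exact hA.conj_mem _ (hUA hz) h
      · intro hz
        rw [← hHA]
        constructor
        · exact H.mul_mem (H.mul_mem (H.inv_mem hh) ((hHA.symm.le.trans inf_le_left) hz)) hh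
        · have : h⁻¹ * z * h = h⁻¹ * z * h⁻¹⁻¹ := by group
          rw [this]
          exact hA.conj_mem _ (hUA hz) h⁻¹
    ext K
    simp only [conjClass, conjClassOn, Set.mem_setOf_eq]
    constructor
    · rintro ⟨g, rfl⟩
      have hg : g ∈ (A : Set G) * (H : Set G) := by
        rw [← Subgroup.normal_mul, htop]; trivial
      obtain ⟨a, ha, h, hh, rfl⟩ := hg
      exact ⟨a, ha, by rw [← conjSub_conjSub, hconjH h hh]⟩
    · rintro ⟨a, ha, rfl⟩
      exact ⟨a, rfl⟩
  · intro hconj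
    set N := Subgroup.normalizer (U : Set G) with hNdef
    have hUN : U ≤ N := Subgroup.le_normalizer
    have key : ∀ g : G, ∃ a ∈ A, conjSub g U = conjSub a U := by
      intro g
      have : conjSub g U ∈ conjClassOn A U := by
        rw [← hconj]; exact ⟨g, rfl⟩
      exact this
    have hANtop : A ⊔ N = ⊤ := by
      rw [Subgroup.eq_top_iff']
      intro g
      obtain ⟨a, ha, hga⟩ := key g
      have hn : a⁻¹ * g ∈ N := by
        rw [Subgroup.mem_normalizer_iff]
        intro x
        have h1 : (a⁻¹ * g) * x * (a⁻¹ * g)⁻¹ ∈ U ↔ g * x * g⁻¹ ∈ conjSub a U := by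
          rw [mem_conjSub]
          rw [show a⁻¹ * (g * x * g⁻¹) * a = (a⁻¹ * g) * x * (a⁻¹ * g)⁻¹ by group]
        have h2 : g * x * g⁻¹ ∈ conjSub g U ↔ x ∈ U := by
          rw [mem_conjSub]
          rw [show g⁻¹ * (g * x * g⁻¹) * g = x by group]
        rw [h1, ← hga, h2]
      have hg : g = a * (a⁻¹ * g) := by group
      rw [hg]
      exact (A ⊔ N).mul_mem (Subgroup.mem_sup_left ha) (Subgroup.mem_sup_right hn)
    -- quotient setup
    set Ubar : Subgroup N := U.subgroupOf N with hUbar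
    set S : Subgroup N := A.subgroupOf N with hS
    haveI hUbarN : Ubar.Normal := Subgroup.normal_in_normalizer
    haveI hSN : S.Normal := Subgroup.normal_subgroupOf
    set φ := QuotientGroup.mk' Ubar with hφ
    have hφsurj : Function.Surjective φ := QuotientGroup.mk'_surjective Ubar
    set M : Subgroup (N ⧸ Ubar) := S.map φ with hM
    haveI hMN : M.Normal := hSN.map φ hφsurj
    have hUS : Ubar ≤ S := fun x hx => hUA hx
    have hker : φ.ker = Ubar := QuotientGroup.ker_mk' Ubar
    -- index of M
    have hMindex : M.index = A.index := by
      have h1 : M.index = S.index := S.index_map_eq hφsurj (hker.le.trans hUS)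
      rw [h1]
      show A.relIndex N = A.index
      rw [← Subgroup.relIndex_sup_right, sup_comm, hANtop, Subgroup.relIndex_top_right]
    -- card of M
    have hMcard : Nat.card M = U.relIndex (A ⊓ N) := by
      have hrange : (φ.comp S.subtype).range = M := by
        rw [MonoidHom.range_comp, Subgroup.range_subtype]
      have hkerψ : (φ.comp S.subtype).ker = Ubar.subgroupOf S := by
        rw [← MonoidHom.comap_ker, hker]; rfl
      calc Nat.card M = Nat.card (φ.comp S.subtype).range := by rw [hrange]
        _ = Nat.card (S ⧸ (φ.comp S.subtype).ker) :=
            Nat.card_congr (QuotientGroup.quotientKerEquivRange _).toEquiv.symm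
        _ = (Ubar.subgroupOf S).index := by rw [hkerψ]; rfl
        _ = Ubar.relIndex S := rfl
        _ = U.relIndex (A ⊓ N) := by
            rw [hUbar, hS, ← Subgroup.inf_subgroupOf_right A N,
              Subgroup.relIndex_subgroupOf inf_le_right]
    have hMcard_pi' : IsPiPrimeNumber π (Nat.card M) := by
      rw [hMcard]
      have hle : U ≤ A ⊓ N := le_inf hUA hUN
      have hdvd : U.relIndex (A ⊓ N) ∣ U.relIndex A :=
        Dvd.intro _ (Subgroup.relIndex_mul_relIndex U (A ⊓ N) A hle inf_le_left)
      exact isPiPrimeNumber_of_dvd hdvd hU.2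
    have hcop : Nat.Coprime (Nat.card M) M.index :=
      (pi_coprime (hMindex ▸ hquot) hMcard_pi').symm
    obtain ⟨K, hK⟩ := Subgroup.exists_right_complement'_of_coprime hcop
    set H0 : Subgroup N := K.comap φ with hH0
    set H : Subgroup G := H0.map N.subtype with hH
    have hUbarH0 : Ubar ≤ H0 := by
      rw [← hker]; exact fun x hx => by
        simp only [hH0, Subgroup.mem_comap]
        rw [MonoidHom.mem_ker] at hx
        rw [hx]; exact K.one_mem
    -- H ⊓ A = U
    have hHA : H ⊓ A = U := by
      apply le_antisymm
      · rintro x ⟨hxH, hxA⟩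
        obtain ⟨y, hy, rfl⟩ := hxH
        have hyS : y ∈ S := hxA
        have hyM : φ y ∈ M := Subgroup.mem_map_of_mem φ hyS
        have : φ y ∈ M ⊓ K := ⟨hyM, hy⟩
        rw [hK.disjoint.eq_bot] at this
        have : y ∈ φ.ker := by rwa [MonoidHom.mem_ker, ← Subgroup.mem_bot]
        rw [hker] at this
        exact this
      · intro x hx
        refine ⟨⟨⟨x, hUN hx⟩, hUbarH0 hx, rfl⟩, hUA hx⟩
    -- cardinalities
    have hcardK : Nat.card K = M.index := by
      have h1 : Nat.card M * Nat.card K = Nat.card (N ⧸ Ubar) := hK.card_mul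
      have h2 : Nat.card M * M.index = Nat.card (N ⧸ Ubar) := M.card_mul_index
      have h0 : Nat.card M ≠ 0 := Nat.card_pos.ne'
      exact Nat.eq_of_mul_eq_mul_left (Nat.pos_of_ne_zero h0) (h1.trans h2.symm)
    have hcardU : Nat.card U = Nat.card (U.subgroupOf A) :=
      Nat.card_congr (Subgroup.subgroupOfEquivOfLe hUA).toEquiv.symm
    have hcardH : Nat.card H = M.index * Nat.card U := by
      have hinj : Function.Injective N.subtype := N.subtype_injective
      have e1 : Nat.card H = Nat.card H0 :=
        (Nat.card_congr (H0.equivMapOfInjective N.subtype hinj).toEquiv).symm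
      have hrange : (φ.comp H0.subtype).range = K := by
        rw [MonoidHom.range_comp, Subgroup.range_subtype,
          Subgroup.map_comap_eq_self_of_surjective hφsurj]
      have hkerψ : (φ.comp H0.subtype).ker = Ubar.subgroupOf H0 := by
        rw [← MonoidHom.comap_ker, hker]; rfl
      have e2 : Nat.card H0 = Nat.card K * Nat.card Ubar := by
        rw [Subgroup.card_eq_card_quotient_mul_card_subgroup (Ubar.subgroupOf H0)]
        congr 1
        · rw [← hkerψ]
          exact (Nat.card_congr (QuotientGroup.quotientKerEquivRange _).toEquiv).trans
            (by rw [hrange])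
        · exact Nat.card_congr (Subgroup.subgroupOfEquivOfLe hUbarH0).toEquiv
      have e3 : Nat.card Ubar = Nat.card U :=
        Nat.card_congr (Subgroup.subgroupOfEquivOfLe hUN).toEquiv
      rw [e1, e2, e3, hcardK]
    refine ⟨H, ⟨?_, ?_⟩, hHA⟩
    · rw [hcardH, hMindex]
      exact isPiNumber_mul hquot (hcardU ▸ hU.1)
    · -- index
      have hHidx : H.index = (U.subgroupOf A).index := by
        have h1 : Nat.card H * H.index = Nat.card G := H.card_mul_index
        have h2 : Nat.card U * U.index = Nat.card G := U.card_mul_index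
        have h3 : Nat.card (U.subgroupOf A) * (U.subgroupOf A).index = Nat.card A :=
          (U.subgroupOf A).card_mul_index
        have h4 : Nat.card A * A.index = Nat.card G := A.card_mul_index
        have hG : Nat.card G = Nat.card U * (U.subgroupOf A).index * A.index := by
          rw [← h4, ← h3, hcardU]
        rw [hcardH, hMindex, hG] at h1
        have hpos1 : 0 < A.index := Nat.pos_of_ne_zero Subgroup.index_ne_zero_of_finite
        have hpos2 : 0 < Nat.card U := Nat.card_pos
        have h1' : A.index * (Nat.card U * H.index)
            = A.index * (Nat.card U * (U.subgroupOf A).index) := by ring_nf; ring_nf at h1; linarith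
        exact Nat.eq_of_mul_eq_mul_left hpos2
          (Nat.eq_of_mul_eq_mul_left hpos1 h1')
      rw [hHidx]
      exact hU.2
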